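/- Let p ≥ 1 and fix t ∈ ℝ^p. Let (Ω, ℱ, P) be a probability space, let A_N : Ω → ℝ^p be random vectors, let C_N : Ω → E_N be random elements of measurable spaces E_N, and let f_N : E_N → ℝ^p be measurable functions. Suppose that, for some complex numbers a and b, the conditional expectations E[exp(i⟨t, A_N⟩) | σ(C_N)] converge to the constant a in probability as N → ∞, and E[exp(i⟨t, f_N(C_N)⟩)] → b. Then E[exp(i⟨t, A_N + f_N(C_N)⟩)] → a·b as N → ∞. -/

import Mathlib

open MeasureTheory Filter Topology

section Aux

variable {Ω : Type*} {m m0 : MeasurableSpace Ω} {μ : Measure Ω}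

lemma condexp_re_aux (hm : m ≤ m0) [IsFiniteMeasure μ] {X : Ω → ℂ}
    (hX : Integrable X μ) :
    (fun ω => ((μ[X|m]) ω).re) =ᵐ[μ] μ[fun ω => (X ω).re | m] := by
  refine ae_eq_condExp_of_forall_setIntegral_eq hm hX.re
    (fun s _ _ => (integrable_condExp (f := X)).re.integrableOn)
    (fun s hs hμs => ?_) ?_
  · have h1 : ∫ ω in s, ((μ[X|m]) ω).re ∂μ = (∫ ω in s, (μ[X|m]) ω ∂μ).re := by
      simpa using integral_re (𝕜 := ℂ) (integrable_condExp (f := X)).integrableOn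
    have h2 : ∫ ω in s, (X ω).re ∂μ = (∫ ω in s, X ω ∂μ).re := by
      simpa using integral_re (𝕜 := ℂ) hX.integrableOn
    rw [h1, h2, setIntegral_condExp hm hX hs]
  · exact StronglyMeasurable.aestronglyMeasurable (Complex.continuous_re.comp_stronglyMeasurable
      stronglyMeasurable_condExp)

lemma condexp_im_aux (hm : m ≤ m0) [IsFiniteMeasure μ] {X : Ω → ℂ}
    (hX : Integrable X μ) :
    (fun ω => ((μ[X|m]) ω).im) =ᵐ[μ] μ[fun ω => (X ω).im | m] := by
  refine ae_eq_condExp_of_forall_setIntegral_eq hm hX.im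
    (fun s _ _ => (integrable_condExp (f := X)).im.integrableOn)
    (fun s hs hμs => ?_) ?_
  · have h1 : ∫ ω in s, ((μ[X|m]) ω).im ∂μ = (∫ ω in s, (μ[X|m]) ω ∂μ).im := by
      simpa using integral_im (𝕜 := ℂ) (integrable_condExp (f := X)).integrableOn
    have h2 : ∫ ω in s, (X ω).im ∂μ = (∫ ω in s, X ω ∂μ).im := by
      simpa using integral_im (𝕜 := ℂ) hX.integrableOn
    rw [h1, h2, setIntegral_condExp hm hX hs]
  · exact StronglyMeasurable.aestronglyMeasurable (Complex.continuous_im.comp_stronglyMeasurable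
      stronglyMeasurable_condExp)

lemma pull_real (hm : m ≤ m0) [IsFiniteMeasure μ] {u v : Ω → ℝ}
    (hu : StronglyMeasurable[m] u) (hv : Integrable v μ) (huv : Integrable (u * v) μ) :
    ∫ ω, u ω * v ω ∂μ = ∫ ω, u ω * (μ[v|m]) ω ∂μ := by
  have h1 := condExp_mul_of_stronglyMeasurable_left hu huv hv
  calc ∫ ω, u ω * v ω ∂μ = ∫ ω, (μ[u * v|m]) ω ∂μ := (integral_condExp hm).symm
    _ = ∫ ω, u ω * (μ[v|m]) ω ∂μ := integral_congr_ae h1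

lemma pull_complex (hm : m ≤ m0) [IsProbabilityMeasure μ] {g X : Ω → ℂ}
    (hg : StronglyMeasurable[m] g) (hXm : AEStronglyMeasurable X μ)
    (hgb : ∀ ω, ‖g ω‖ ≤ 1) (hXb : ∀ ω, ‖X ω‖ ≤ 1) :
    ∫ ω, g ω * X ω ∂μ = ∫ ω, g ω * (μ[X|m]) ω ∂μ := by
  have hXi : Integrable X μ :=
    (integrable_const (1 : ℝ)).mono' hXm (ae_of_all _ hXb)
  have hgm0 : AEStronglyMeasurable g μ := (hg.mono hm).aestronglyMeasurable
  have hEi : Integrable (μ[X|m]) μ := integrable_condExp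
  have hurm : StronglyMeasurable[m] (fun ω => (g ω).re) :=
    Complex.continuous_re.comp_stronglyMeasurable hg
  have huim : StronglyMeasurable[m] (fun ω => (g ω).im) :=
    Complex.continuous_im.comp_stronglyMeasurable hg
  have hub : ∀ ω, |(g ω).re| ≤ 1 := fun ω => (Complex.abs_re_le_norm _).trans (hgb ω)
  have hub' : ∀ ω, |(g ω).im| ≤ 1 := fun ω => (Complex.abs_im_le_norm _).trans (hgb ω)
  have hvb : ∀ ω, |(X ω).re| ≤ 1 := fun ω => (Complex.abs_re_le_norm _).trans (hXb ω)
  have hvb' : ∀ ω, |(X ω).im| ≤ 1 := fun ω => (Complex.abs_im_le_norm _).trans (hXb ω)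
  have hvrm : AEStronglyMeasurable (fun ω => (X ω).re) μ :=
    Complex.continuous_re.comp_aestronglyMeasurable hXm
  have hvim : AEStronglyMeasurable (fun ω => (X ω).im) μ :=
    Complex.continuous_im.comp_aestronglyMeasurable hXm
  have hvri : Integrable (fun ω => (X ω).re) μ := (integrable_const (1 : ℝ)).mono' hvrm
    (ae_of_all _ fun ω => by simpa using hvb ω)
  have hvii : Integrable (fun ω => (X ω).im) μ := (integrable_const (1 : ℝ)).mono' hvim
    (ae_of_all _ fun ω => by simpa using hvb' ω)
  have hprod : ∀ (u v : Ω → ℝ), AEStronglyMeasurable u μ → AEStronglyMeasurable v μ →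
      (∀ ω, |u ω| ≤ 1) → (∀ ω, |v ω| ≤ 1) → Integrable (u * v) μ := by
    intro u v hu hv hub hvb
    refine (integrable_const (1 : ℝ)).mono' (hu.mul hv) (ae_of_all _ fun ω => ?_)
    simp only [Real.norm_eq_abs, Pi.mul_apply, abs_mul]
    exact mul_le_one₀ (hub ω) (abs_nonneg _) (hvb ω)
  have hurm0 : AEStronglyMeasurable (fun ω => (g ω).re) μ := (hurm.mono hm).aestronglyMeasurable
  have huim0 : AEStronglyMeasurable (fun ω => (g ω).im) μ := (huim.mono hm).aestronglyMeasurable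
  have hgXi : Integrable (fun ω => g ω * X ω) μ := hXi.bdd_mul hgm0 (ae_of_all _ hgb)
  have hgEi : Integrable (fun ω => g ω * (μ[X|m]) ω) μ := hEi.bdd_mul hgm0 (ae_of_all _ hgb)
  have hEre : Integrable (fun ω => ((μ[X|m]) ω).re) μ := by simpa using hEi.re
  have hEim : Integrable (fun ω => ((μ[X|m]) ω).im) μ := by simpa using hEi.im
  have hre := (condexp_re_aux hm hXi).symm
  have him := (condexp_im_aux hm hXi).symm
  have key_r : ∀ (u : Ω → ℝ), (∫ ω, u ω * (μ[fun ω' => (X ω').re|m]) ω ∂μ)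
      = ∫ ω, u ω * ((μ[X|m]) ω).re ∂μ := fun u =>
    integral_congr_ae (hre.mono fun ω hω => by dsimp only; rw [hω])
  have key_i : ∀ (u : Ω → ℝ), (∫ ω, u ω * (μ[fun ω' => (X ω').im|m]) ω ∂μ)
      = ∫ ω, u ω * ((μ[X|m]) ω).im ∂μ := fun u =>
    integral_congr_ae (him.mono fun ω hω => by dsimp only; rw [hω])
  apply Complex.ext
  · have h1 : (∫ ω, g ω * X ω ∂μ).re = ∫ ω, (g ω * X ω).re ∂μ := by
      simpa using (integral_re (𝕜 := ℂ) hgXi).symm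
    have h2 : (∫ ω, g ω * (μ[X|m]) ω ∂μ).re = ∫ ω, (g ω * (μ[X|m]) ω).re ∂μ := by
      simpa using (integral_re (𝕜 := ℂ) hgEi).symm
    rw [h1, h2]
    calc ∫ ω, (g ω * X ω).re ∂μ
        = ∫ ω, ((g ω).re * (X ω).re - (g ω).im * (X ω).im) ∂μ := by
          simp only [Complex.mul_re]
      _ = (∫ ω, (g ω).re * (X ω).re ∂μ) - ∫ ω, (g ω).im * (X ω).im ∂μ :=
          integral_sub (hprod _ _ hurm0 hvrm hub hvb) (hprod _ _ huim0 hvim hub' hvb')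
      _ = (∫ ω, (g ω).re * ((μ[X|m]) ω).re ∂μ) - ∫ ω, (g ω).im * ((μ[X|m]) ω).im ∂μ := by
          rw [pull_real hm hurm hvri (hprod _ _ hurm0 hvrm hub hvb),
            pull_real hm huim hvii (hprod _ _ huim0 hvim hub' hvb'), key_r, key_i]
      _ = ∫ ω, ((g ω).re * ((μ[X|m]) ω).re - (g ω).im * ((μ[X|m]) ω).im) ∂μ :=
          (integral_sub (hEre.bdd_mul hurm0 (c := 1) (ae_of_all _ fun ω => by simpa using hub ω))
            (hEim.bdd_mul huim0 (c := 1) (ae_of_all _ fun ω => by simpa using hub' ω))).symm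
      _ = ∫ ω, (g ω * (μ[X|m]) ω).re ∂μ := by simp only [Complex.mul_re]
  · have h1 : (∫ ω, g ω * X ω ∂μ).im = ∫ ω, (g ω * X ω).im ∂μ := by
      simpa using (integral_im (𝕜 := ℂ) hgXi).symm
    have h2 : (∫ ω, g ω * (μ[X|m]) ω ∂μ).im = ∫ ω, (g ω * (μ[X|m]) ω).im ∂μ := by
      simpa using (integral_im (𝕜 := ℂ) hgEi).symm
    rw [h1, h2]
    calc ∫ ω, (g ω * X ω).im ∂μ
        = ∫ ω, ((g ω).re * (X ω).im + (g ω).im * (X ω).re) ∂μ := by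
          simp only [Complex.mul_im]
      _ = (∫ ω, (g ω).re * (X ω).im ∂μ) + ∫ ω, (g ω).im * (X ω).re ∂μ :=
          integral_add (hprod _ _ hurm0 hvim hub hvb') (hprod _ _ huim0 hvrm hub' hvb)
      _ = (∫ ω, (g ω).re * ((μ[X|m]) ω).im ∂μ) + ∫ ω, (g ω).im * ((μ[X|m]) ω).re ∂μ := by
          rw [pull_real hm hurm hvii (hprod _ _ hurm0 hvim hub hvb'),
            pull_real hm huim hvri (hprod _ _ huim0 hvrm hub' hvb), key_r, key_i]
      _ = ∫ ω, ((g ω).re * ((μ[X|m]) ω).im + (g ω).im * ((μ[X|m]) ω).re) ∂μ :=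
          (integral_add (hEim.bdd_mul hurm0 (c := 1) (ae_of_all _ fun ω => by simpa using hub ω))
            (hEre.bdd_mul huim0 (c := 1) (ae_of_all _ fun ω => by simpa using hub' ω))).symm
      _ = ∫ ω, (g ω * (μ[X|m]) ω).im ∂μ := by simp only [Complex.mul_im]

end Aux

/-- if the conditional characteristic functions
`E[exp(i⟨t, A_N⟩) | σ(C_N)]` converge in probability to a constant `a`, and the
characteristic functions `E[exp(i⟨t, f_N(C_N)⟩)]` converge to `b`, then
`E[exp(i⟨t, A_N + f_N(C_N)⟩)] → a·b`. (Lemma C.2 of the paper.) -/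
theorem stmt19 (p : ℕ) (hp : 1 ≤ p) (t : Fin p → ℝ)
    {Ω : Type*} [MeasurableSpace Ω] (μ : Measure Ω) [IsProbabilityMeasure μ]
    (A : ℕ → Ω → (Fin p → ℝ)) (hA : ∀ N, Measurable (A N))
    (E : ℕ → Type*) [∀ N, MeasurableSpace (E N)]
    (C : (N : ℕ) → Ω → E N) (hC : ∀ N, Measurable (C N))
    (fN : (N : ℕ) → E N → (Fin p → ℝ)) (hf : ∀ N, Measurable (fN N))
    (a b : ℂ)
    (ha : TendstoInMeasure μ
      (fun N => μ[(fun ω => Complex.exp (Complex.I * ((∑ i, t i * A N ω i : ℝ) : ℂ))) |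
          MeasurableSpace.comap (C N) inferInstance])
      atTop (fun _ => a))
    (hb : Tendsto
      (fun N => ∫ ω, Complex.exp (Complex.I * ((∑ i, t i * fN N (C N ω) i : ℝ) : ℂ)) ∂μ)
      atTop (𝓝 b)) :
    Tendsto
      (fun N => ∫ ω,
        Complex.exp (Complex.I * ((∑ i, t i * (A N ω i + fN N (C N ω) i) : ℝ) : ℂ)) ∂μ)
      atTop (𝓝 (a * b)) := by
  -- notation
  have hnorm : ∀ r : ℝ, ‖Complex.exp (Complex.I * r)‖ = 1 := fun r => by
    rw [mul_comm, Complex.norm_exp_ofReal_mul_I]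
  set X : ℕ → Ω → ℂ :=
    fun N ω => Complex.exp (Complex.I * ((∑ i, t i * A N ω i : ℝ) : ℂ)) with hX
  set g : ℕ → Ω → ℂ :=
    fun N ω => Complex.exp (Complex.I * ((∑ i, t i * fN N (C N ω) i : ℝ) : ℂ)) with hg
  set m : ℕ → MeasurableSpace Ω :=
    fun N => MeasurableSpace.comap (C N) inferInstance with hmdef
  have hm : ∀ N, m N ≤ ‹MeasurableSpace Ω› := fun N => (hC N).comap_le
  set En : ℕ → Ω → ℂ := fun N => μ[X N | m N] with hEn
  -- measurability
  have hCm : ∀ N, Measurable[m N] (C N) := fun N => measurable_iff_comap_le.mpr le_rfl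
  have hgm : ∀ N, StronglyMeasurable[m N] (g N) := by
    intro N
    have h1 : Measurable[m N] fun ω => (∑ i, t i * fN N (C N ω) i : ℝ) :=
      Finset.measurable_sum _ fun i _ =>
        measurable_const.mul ((measurable_pi_apply i).comp ((hf N).comp (hCm N)))
    exact (Complex.measurable_exp.comp
      (measurable_const.mul (Complex.measurable_ofReal.comp h1))).stronglyMeasurable
  have hXm : ∀ N, Measurable (X N) := by
    intro N
    have h1 : Measurable fun ω => (∑ i, t i * A N ω i : ℝ) :=
      Finset.measurable_sum _ fun i _ =>
        measurable_const.mul ((measurable_pi_apply i).comp (hA N))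
    exact Complex.measurable_exp.comp
      (measurable_const.mul (Complex.measurable_ofReal.comp h1))
  have hgb : ∀ N ω, ‖g N ω‖ ≤ 1 := fun N ω => le_of_eq (hnorm _)
  have hXb : ∀ N ω, ‖X N ω‖ ≤ 1 := fun N ω => le_of_eq (hnorm _)
  have hXi : ∀ N, Integrable (X N) μ :=
    fun N => (integrable_const (1 : ℝ)).mono'
      (hXm N).aestronglyMeasurable (ae_of_all _ (hXb N))
  -- Step A: factor the integrand
  have hstepA : ∀ N, (∫ ω, Complex.exp
        (Complex.I * ((∑ i, t i * (A N ω i + fN N (C N ω) i) : ℝ) : ℂ)) ∂μ)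
      = ∫ ω, g N ω * X N ω ∂μ := by
    intro N
    refine integral_congr_ae (ae_of_all _ fun ω => ?_)
    dsimp only
    have hsum : (∑ i, t i * (A N ω i + fN N (C N ω) i) : ℝ)
        = (∑ i, t i * A N ω i) + (∑ i, t i * fN N (C N ω) i) := by
      rw [← Finset.sum_add_distrib]
      exact Finset.sum_congr rfl fun i _ => mul_add _ _ _
    rw [hsum, Complex.ofReal_add, mul_add, Complex.exp_add, mul_comm]
  -- Step B : pull-out
  have hstepB : ∀ N, ∫ ω, g N ω * X N ω ∂μ = ∫ ω, g N ω * En N ω ∂μ := fun N =>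
    pull_complex (hm N) (hgm N) (hXm N).aestronglyMeasurable (hgb N) (hXb N)
  -- a.e. bound on the conditional expectation
  have hEb : ∀ N, ∀ᵐ ω ∂μ, ‖En N ω‖ ≤ 2 := by
    intro N
    have hXre : ∀ᵐ ω ∂μ, |(X N ω).re| ≤ ((1 : NNReal) : ℝ) :=
      ae_of_all _ fun ω => by
        simpa using (Complex.abs_re_le_norm _).trans (hXb N ω)
    have hXim : ∀ᵐ ω ∂μ, |(X N ω).im| ≤ ((1 : NNReal) : ℝ) :=
      ae_of_all _ fun ω => by
        simpa using (Complex.abs_im_le_norm _).trans (hXb N ω)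
    have h1 : ∀ᵐ ω ∂μ, |(μ[fun ω' => (X N ω').re | m N]) ω| ≤ ((1 : NNReal) : ℝ) :=
      ae_bdd_condExp_of_ae_bdd hXre
    have h2 : ∀ᵐ ω ∂μ, |(μ[fun ω' => (X N ω').im | m N]) ω| ≤ ((1 : NNReal) : ℝ) :=
      ae_bdd_condExp_of_ae_bdd hXim
    filter_upwards [h1, h2, condexp_re_aux (hm N) (hXi N), condexp_im_aux (hm N) (hXi N)]
      with ω hb1 hb2 he1 he2
    have : ‖En N ω‖ ≤ |(En N ω).re| + |(En N ω).im| := by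
      exact Complex.norm_le_abs_re_add_abs_im _
    refine this.trans ?_
    rw [he1, he2]
    calc |(μ[fun ω' => (X N ω').re | m N]) ω| + |(μ[fun ω' => (X N ω').im | m N]) ω|
        ≤ 1 + 1 := add_le_add (by simpa using hb1) (by simpa using hb2)
      _ = 2 := by norm_num
  -- convergence of L¹ norms
  have hL1 : Tendsto (fun N => ∫ ω, ‖En N ω - a‖ ∂μ) atTop (𝓝 0) := by
    refine tendsto_of_subseq_tendsto fun ns hns => ?_
    have hsub : TendstoInMeasure μ (fun n => En (ns n)) atTop (fun _ => a) :=
      fun ε hε => (ha ε hε).comp hns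
    obtain ⟨ms, -, hae⟩ := hsub.exists_seq_tendsto_ae
    refine ⟨ms, ?_⟩
    have hmeas : ∀ n, AEStronglyMeasurable (fun ω => ‖En (ns (ms n)) ω - a‖) μ := fun n =>
      (((stronglyMeasurable_condExp.mono (hm _)).aestronglyMeasurable).sub
        aestronglyMeasurable_const).norm
    have h0 : Tendsto (fun n => ∫ ω, ‖En (ns (ms n)) ω - a‖ ∂μ) atTop
        (𝓝 (∫ (_ : Ω), (0 : ℝ) ∂μ)) := by
      refine tendsto_integral_of_dominated_convergence (fun _ => 2 + ‖a‖) hmeas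
        (integrable_const _) ?_ ?_
      · intro n
        filter_upwards [hEb (ns (ms n))] with ω hω
        have : ‖En (ns (ms n)) ω - a‖ ≤ ‖En (ns (ms n)) ω‖ + ‖a‖ := norm_sub_le _ _
        simpa using this.trans (add_le_add hω le_rfl)
      · filter_upwards [hae] with ω hω
        simpa using (hω.sub_const a).norm
    simpa using h0
  -- conclusion
  have hgint' : ∀ N, Integrable (g N) μ := fun N => (integrable_const (1 : ℝ)).mono'
    ((hgm N).mono (hm N)).aestronglyMeasurable (ae_of_all _ (hgb N))
  have hI : ∀ N, Integrable (fun ω => g N ω * (En N ω - a)) μ := fun N =>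
    (Integrable.sub integrable_condExp (integrable_const a)).bdd_mul
      ((hgm N).mono (hm N)).aestronglyMeasurable (ae_of_all _ (hgb N))
  have hI' : ∀ N, Integrable (fun ω => a * g N ω) μ := fun N => (hgint' N).const_mul a
  have hT1 : Tendsto (fun N => ∫ ω, g N ω * (En N ω - a) ∂μ) atTop (𝓝 0) := by
    refine squeeze_zero_norm (fun N => ?_) hL1
    calc ‖∫ ω, g N ω * (En N ω - a) ∂μ‖ ≤ ∫ ω, ‖g N ω * (En N ω - a)‖ ∂μ :=
        norm_integral_le_integral_norm _
      _ ≤ ∫ ω, ‖En N ω - a‖ ∂μ := by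
        refine integral_mono
          ((hI N).norm)
          ((Integrable.sub (integrable_condExp (f := X N) (m := m N)) (integrable_const a)).norm)
          fun ω => ?_
        rw [norm_mul]
        exact mul_le_of_le_one_left (norm_nonneg _) (hgb N ω)
  have hsplit : ∀ N, ∫ ω, g N ω * En N ω ∂μ
      = (∫ ω, g N ω * (En N ω - a) ∂μ) + a * ∫ ω, g N ω ∂μ := by
    intro N
    rw [← integral_const_mul, ← integral_add (hI N) (hI' N)]
    refine integral_congr_ae (ae_of_all _ fun ω => ?_)
    ring
  have hfinal : Tendsto (fun N => ∫ ω, g N ω * En N ω ∂μ) atTop (𝓝 (a * b)) := by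
    rw [show (a * b) = 0 + a * b by ring]
    simp only [hsplit]
    exact hT1.add (hb.const_mul a)
  refine Tendsto.congr (fun N => ?_) hfinal
  rw [← hstepB, ← hstepA]
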